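/- Let v₁,…,vₙ ∈ ℂ^d be a δ-SG configuration, and let V be the n × d matrix whose i-th row is vᵢ. Then there exists an m × n complex matrix A such that A is a (3, 3k, 6)-design matrix with k = ⌈δ(n−1)⌉, every row of A has support of size exactly 3, and A·V = 0. -/

import Mathlib

/-- An `m × n` matrix `A` over a field is a `(q,k,t)`-design matrix if every row has
support of size at most `q`, every column has support of size at least `k`, and the
supports of any two distinct columns intersect in at most `t` coordinates. -/
def IsDesignMatrix {F : Type*} [Field F] {m n : ℕ}
    (A : Matrix (Fin m) (Fin n) F) (q k t : ℕ) : Prop :=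
  (∀ i : Fin m, {j : Fin n | A i j ≠ 0}.ncard ≤ q) ∧
  (∀ j : Fin n, k ≤ {i : Fin m | A i j ≠ 0}.ncard) ∧
  (∀ j₁ j₂ : Fin n, j₁ ≠ j₂ →
    ({i : Fin m | A i j₁ ≠ 0} ∩ {i : Fin m | A i j₂ ≠ 0}).ncard ≤ t)

/-- `v j` lies on a special line through `v i`: the line through the two (distinct)
points contains a third point of the configuration. -/
def OnSpecialLine {n d : ℕ} (v : Fin n → (Fin d → ℂ)) (i j : Fin n) : Prop :=
  j ≠ i ∧ ∃ l : Fin n, l ≠ i ∧ l ≠ j ∧ Collinear ℂ ({v i, v j, v l} : Set (Fin d → ℂ))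

/-- A set of `n` distinct points is a `δ`-SG configuration if for every point `v i`, at
least `δ(n-1)` of the remaining points lie on special lines through `v i`. -/
def IsSGConfig {n d : ℕ} (v : Fin n → (Fin d → ℂ)) (δ : ℝ) : Prop :=
  Function.Injective v ∧
  ∀ i : Fin n, δ * ((n : ℝ) - 1) ≤ (({j : Fin n | OnSpecialLine v i j}).ncard : ℝ)

/-! ### Auxiliary material: idempotent quasigroups of every order `≥ 3` -/

open Classical

section Quasi

lemma quasi_transport {α β : Type} (e : α ≃ β) (f : β → β → β)
    (h1 : ∀ i, Function.Bijective (f i)) (h2 : ∀ j, Function.Bijective (fun i => f i j))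
    (h3 : ∀ i, f i i = i) :
    ∃ g : α → α → α, (∀ i, Function.Bijective (g i)) ∧
      (∀ j, Function.Bijective (fun i => g i j)) ∧ (∀ i, g i i = i) := by
  refine ⟨fun a b => e.symm (f (e a) (e b)), ?_, ?_, ?_⟩
  · intro i
    exact e.symm.bijective.comp ((h1 (e i)).comp e.bijective)
  · intro j
    have : (fun i => e.symm (f (e i) (e j))) =
        (e.symm ∘ (fun x => f x (e j)) ∘ e) := rfl
    rw [this]
    exact e.symm.bijective.comp ((h2 (e j)).comp e.bijective)
  · intro i; simp only []; rw [h3]; exact e.symm_apply_apply i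

lemma quasi_odd (q : ℕ) (hq : Odd q) (h3 : 3 ≤ q) :
    ∃ f : ZMod q → ZMod q → ZMod q, (∀ i, Function.Bijective (f i)) ∧
      (∀ j, Function.Bijective (fun i => f i j)) ∧ (∀ i, f i i = i) := by
  haveI : NeZero q := ⟨by omega⟩
  have hcop : Nat.Coprime 2 q := by
    exact Nat.coprime_two_left.2 hq
  obtain ⟨u, hu⟩ : ∃ u : ZMod q, 2 * u = 1 := by
    have : IsUnit (2 : ZMod q) := by
      have := (ZMod.isUnit_iff_coprime 2 q).2 (by exact_mod_cast hcop)
      simpa using this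
    obtain ⟨w, hw⟩ := this
    exact ⟨↑w⁻¹, by rw [← hw]; simp [← Units.val_mul]⟩
  have hcancel : ∀ a b : ZMod q, a * u = b * u → a = b := by
    intro a b h
    have := congrArg (· * 2) h
    simp only [mul_assoc] at this
    rwa [mul_comm u 2, hu, mul_one, mul_one] at this
  refine ⟨fun i j => (i + j) * u, ?_, ?_, ?_⟩
  · intro i
    rw [Finite.injective_iff_bijective.symm]
    intro a b h
    have := hcancel _ _ h
    exact add_left_cancel this
  · intro j
    rw [Finite.injective_iff_bijective.symm]
    intro a b h
    have := hcancel _ _ h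
    exact add_right_cancel this
  · intro i
    show (i + i) * u = i
    have h2i : i + i = 2 * i := (two_mul i).symm
    rw [h2i, mul_assoc, mul_comm i u, ← mul_assoc, hu, one_mul]

lemma quasi_even (q : ℕ) (hq : Odd q) (h3 : 3 ≤ q) :
    ∃ f : Option (ZMod q) → Option (ZMod q) → Option (ZMod q),
      (∀ i, Function.Bijective (f i)) ∧
      (∀ j, Function.Bijective (fun i => f i j)) ∧ (∀ i, f i i = i) := by
  haveI : NeZero q := ⟨by omega⟩
  haveI : Fact (1 < q) := ⟨by omega⟩
  obtain ⟨u, hu⟩ : ∃ u : ZMod q, 2 * u = 1 := by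
    have : IsUnit (2 : ZMod q) := by
      have := (ZMod.isUnit_iff_coprime 2 q).2
        (by exact_mod_cast Nat.coprime_two_left.2 hq)
      simpa using this
    obtain ⟨w, hw⟩ := this
    exact ⟨↑w⁻¹, by rw [← hw]; simp [← Units.val_mul]⟩
  have hcancel : ∀ a b : ZMod q, a * u = b * u → a = b := by
    intro a b h
    have := congrArg (· * 2) h
    simp only [mul_assoc] at this
    rwa [mul_comm u 2, hu, mul_one, mul_one] at this
  have hone : (1 : ZMod q) ≠ 0 := one_ne_zero
  have hsucc : ∀ i : ZMod q, i ≠ i + 1 := by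
    intro i h
    have : (0 : ZMod q) = 1 := by
      have := congrArg (· - i) h
      simpa using this
    exact hone this.symm
  refine ⟨fun a b => match a, b with
    | some i, some j => if j = i + 1 then none else some ((i + j) * u)
    | some i, none => some ((i + i + 1) * u)
    | none, some j => some ((j + j - 1) * u)
    | none, none => none, ?_, ?_, ?_⟩
  · intro a
    rw [Finite.injective_iff_bijective.symm]
    intro x y h
    match a, x, y with
    | some i, some j, some j' => ?_
    | some i, some j, none => ?_
    | some i, none, some j' => ?_
    | some i, none, none => rfl
    | none, some j, some j' => ?_
    | none, some j, none => simp at h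
    | none, none, some j' => simp at h
    | none, none, none => rfl
    · simp only [] at h
      split_ifs at h with h1 h2
      · rw [h1, h2]
      · simp only [Option.some.injEq] at h
        have := hcancel _ _ h
        rw [add_left_cancel this]
    · simp only [] at h
      split_ifs at h with h1
      simp only [Option.some.injEq] at h
      have := hcancel _ _ h
      exfalso; apply h1
      linear_combination this
    · simp only [] at h
      split_ifs at h with h1
      simp only [Option.some.injEq] at h
      have := hcancel _ _ h
      exfalso; apply h1
      linear_combination -this
    · simp only [Option.some.injEq] at h
      have := hcancel _ _ h
      have h2 : 2 * j = 2 * j' := by linear_combination this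
      congr 1
      calc j = 2 * j * u := by rw [mul_comm 2 j, mul_assoc, hu, mul_one]
        _ = 2 * j' * u := by rw [h2]
        _ = j' := by rw [mul_comm 2 j', mul_assoc, hu, mul_one]
  · intro b
    rw [Finite.injective_iff_bijective.symm]
    intro x y h
    match b, x, y with
    | some j, some i, some i' => ?_
    | some j, some i, none => ?_
    | some j, none, some i' => ?_
    | some j, none, none => rfl
    | none, some i, some i' => ?_
    | none, some i, none => simp at h
    | none, none, some i' => simp at h
    | none, none, none => rfl
    · simp only [] at h
      split_ifs at h with h1 h2
      · rw [show i = i' from by rw [h1] at h2; exact add_right_cancel h2]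
      · simp only [Option.some.injEq] at h
        have := hcancel _ _ h
        rw [add_right_cancel this]
    · simp only [] at h
      split_ifs at h with h1
      simp only [Option.some.injEq] at h
      have := hcancel _ _ h
      exfalso; apply h1
      linear_combination -this
    · simp only [] at h
      split_ifs at h with h1
      simp only [Option.some.injEq] at h
      have := hcancel _ _ h
      exfalso; apply h1
      linear_combination this
    · simp only [Option.some.injEq] at h
      have := hcancel _ _ h
      have h2 : 2 * i = 2 * i' := by linear_combination this
      congr 1
      calc i = 2 * i * u := by rw [mul_comm 2 i, mul_assoc, hu, mul_one]
        _ = 2 * i' * u := by rw [h2]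
        _ = i' := by rw [mul_comm 2 i', mul_assoc, hu, mul_one]
  · intro a
    match a with
    | none => rfl
    | some i =>
      simp only [if_neg (hsucc i), Option.some.injEq]
      calc (i + i) * u = 2 * i * u := by rw [two_mul]
        _ = i := by rw [mul_comm 2 i, mul_assoc, hu, mul_one]

lemma quasi_card (α : Type) [Fintype α] (h3 : 3 ≤ Fintype.card α) :
    (∃ f : α → α → α, (∀ i, Function.Bijective (f i)) ∧
      (∀ j, Function.Bijective (fun i => f i j)) ∧ (∀ i, f i i = i)) := by
  set r := Fintype.card α with hr
  rcases Nat.even_or_odd r with he | ho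
  · set q := r - 1 with hq
    have hqodd : Odd q := by
      rcases he with ⟨k, hk⟩
      exact ⟨k - 1, by omega⟩
    have hq3 : 3 ≤ q := by
      rcases he with ⟨k, hk⟩
      omega
    haveI : NeZero q := ⟨by omega⟩
    have hcard : Fintype.card α = Fintype.card (Option (ZMod q)) := by
      rw [Fintype.card_option, ZMod.card]
      omega
    obtain ⟨f, hf1, hf2, hf3⟩ := quasi_even q hqodd hq3
    exact quasi_transport (Fintype.equivOfCardEq hcard) f hf1 hf2 hf3
  · haveI : NeZero r := ⟨by omega⟩
    have hcard : Fintype.card α = Fintype.card (ZMod r) := by rw [ZMod.card]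
    obtain ⟨f, hf1, hf2, hf3⟩ := quasi_odd r ho (by omega)
    exact quasi_transport (Fintype.equivOfCardEq hcard) f hf1 hf2 hf3

end Quasi

/-! ### Lines through pairs of configuration points -/

section Lines

variable {n d : ℕ}

/-- The set of indices whose points lie on the line through `v i` and `v j`. -/
def lineS (v : Fin n → Fin d → ℂ) (i j : Fin n) : Set (Fin n) :=
  {l | ∃ t : ℂ, v l = v i + t • (v j - v i)}

lemma left_mem_lineS (v : Fin n → Fin d → ℂ) (i j : Fin n) : i ∈ lineS v i j :=
  ⟨0, by simp⟩

lemma right_mem_lineS (v : Fin n → Fin d → ℂ) (i j : Fin n) : j ∈ lineS v i j :=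
  ⟨1, by simp⟩

lemma collinear_iff_mem_lineS {v : Fin n → Fin d → ℂ} {i j : Fin n}
    (hne : v i ≠ v j) (l : Fin n) :
    Collinear ℂ ({v i, v j, v l} : Set (Fin d → ℂ)) ↔ l ∈ lineS v i j := by
  constructor
  · intro hc
    rw [collinear_iff_of_mem (Set.mem_insert (v i) _)] at hc
    obtain ⟨w, hw⟩ := hc
    obtain ⟨r₁, hr₁⟩ := hw (v j) (by simp)
    obtain ⟨r₂, hr₂⟩ := hw (v l) (by simp)
    have hr₁0 : r₁ ≠ 0 := by
      intro h0
      apply hne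
      rw [hr₁, h0, zero_smul, zero_vadd]
    refine ⟨r₂ / r₁, ?_⟩
    have hj : v j - v i = r₁ • w := by rw [hr₁]; simp [vadd_eq_add]
    rw [hr₂]
    rw [hj, smul_smul, div_mul_cancel₀ _ hr₁0]
    simp [vadd_eq_add, add_comm]
  · rintro ⟨t, ht⟩
    rw [collinear_iff_of_mem (Set.mem_insert (v i) _)]
    refine ⟨v j - v i, ?_⟩
    intro p hp
    rcases hp with h | h | h
    · exact ⟨0, by simp [h]⟩
    · refine ⟨1, ?_⟩
      rw [h, one_smul, vadd_eq_add]
      abel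
    · simp only [Set.mem_singleton_iff] at h
      refine ⟨t, ?_⟩
      rw [h, ht, vadd_eq_add]
      abel

/-- Two distinct points of a line determine the same line. -/
lemma lineS_eq {v : Fin n → Fin d → ℂ} {i j x y : Fin n}
    (hx : x ∈ lineS v i j) (hy : y ∈ lineS v i j)
    (hxy : v x ≠ v y) : lineS v x y = lineS v i j := by
  obtain ⟨s, hs⟩ := hx
  obtain ⟨u, hu⟩ := hy
  have hsu : s ≠ u := by
    intro h; apply hxy; rw [hs, hu, h]
  ext l
  constructor
  · rintro ⟨t, ht⟩
    refine ⟨s + t * (u - s), ?_⟩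
    rw [ht, hs, hu]
    have : (v i + u • (v j - v i)) - (v i + s • (v j - v i)) = (u - s) • (v j - v i) := by
      rw [sub_smul]; abel
    rw [this, smul_smul, add_smul]
    abel
  · rintro ⟨t, ht⟩
    refine ⟨(t - s) / (u - s), ?_⟩
    rw [ht, hs, hu]
    have h1 : (v i + u • (v j - v i)) - (v i + s • (v j - v i)) = (u - s) • (v j - v i) := by
      rw [sub_smul]; abel
    rw [h1, smul_smul, div_mul_cancel₀ _ (sub_ne_zero.2 (Ne.symm hsu)), sub_smul]
    abel

end Lines

/-! ### A fixed quasigroup structure on every subset of `Fin n` -/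

section QGdef

variable {n d : ℕ}

lemma quasi_set (s : Set (Fin n)) (h : 3 ≤ s.ncard) :
    ∃ f : ↥s → ↥s → ↥s, (∀ i, Function.Bijective (f i)) ∧
      (∀ j, Function.Bijective (fun i => f i j)) ∧ (∀ i, f i i = i) := by
  haveI : Fintype ↥s := s.toFinite.fintype
  apply quasi_card
  have hc : s.ncard = Fintype.card ↥s := by
    rw [← Nat.card_coe_set_eq, Nat.card_eq_fintype_card]
  omega

noncomputable def QG (s : Set (Fin n)) : ↥s → ↥s → ↥s :=
  if h : 3 ≤ s.ncard then (quasi_set s h).choose else fun a _ => a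

lemma QG_spec {s : Set (Fin n)} (h : 3 ≤ s.ncard) :
    (∀ i, Function.Bijective (QG s i)) ∧
      (∀ j, Function.Bijective (fun i => QG s i j)) ∧ (∀ i, QG s i i = i) := by
  rw [QG, dif_pos h]
  exact (quasi_set s h).choose_spec

lemma QG_congr {s t : Set (Fin n)} (h : s = t) {a b : Fin n}
    (ha : a ∈ s) (hb : b ∈ s) (ha' : a ∈ t) (hb' : b ∈ t) :
    (↑(QG s ⟨a, ha⟩ ⟨b, hb⟩) : Fin n) = ↑(QG t ⟨a, ha'⟩ ⟨b, hb'⟩) := by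
  subst h; rfl

/-- The third point of the collinear triple generated by the pair `(a, b)`. -/
noncomputable def thirdPt (v : Fin n → Fin d → ℂ) (a b : Fin n) : Fin n :=
  ↑(QG (lineS v a b) ⟨a, left_mem_lineS v a b⟩ ⟨b, right_mem_lineS v a b⟩)

lemma thirdPt_mem (v : Fin n → Fin d → ℂ) (a b : Fin n) :
    thirdPt v a b ∈ lineS v a b :=
  (QG (lineS v a b) ⟨a, left_mem_lineS v a b⟩ ⟨b, right_mem_lineS v a b⟩).2

/-- The line parameter of the third point. -/
noncomputable def tpar (v : Fin n → Fin d → ℂ) (a b : Fin n) : ℂ :=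
  (thirdPt_mem v a b).choose

lemma tpar_spec (v : Fin n → Fin d → ℂ) (a b : Fin n) :
    v (thirdPt v a b) = v a + tpar v a b • (v b - v a) :=
  (thirdPt_mem v a b).choose_spec

lemma thirdPt_ne_left {v : Fin n → Fin d → ℂ} {a b : Fin n}
    (h3 : 3 ≤ (lineS v a b).ncard) (hab : a ≠ b) : thirdPt v a b ≠ a := by
  intro h
  obtain ⟨hrow, hcol, hid⟩ := QG_spec h3
  have he : QG (lineS v a b) ⟨a, left_mem_lineS v a b⟩ ⟨b, right_mem_lineS v a b⟩
      = ⟨a, left_mem_lineS v a b⟩ := Subtype.ext h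
  have := (hrow ⟨a, left_mem_lineS v a b⟩).injective
    (he.trans (hid ⟨a, left_mem_lineS v a b⟩).symm)
  exact hab (congrArg Subtype.val this).symm

lemma thirdPt_ne_right {v : Fin n → Fin d → ℂ} {a b : Fin n}
    (h3 : 3 ≤ (lineS v a b).ncard) (hab : a ≠ b) : thirdPt v a b ≠ b := by
  intro h
  obtain ⟨hrow, hcol, hid⟩ := QG_spec h3
  have he : QG (lineS v a b) ⟨a, left_mem_lineS v a b⟩ ⟨b, right_mem_lineS v a b⟩
      = ⟨b, right_mem_lineS v a b⟩ := Subtype.ext h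
  have := (hcol ⟨b, right_mem_lineS v a b⟩).injective
    (he.trans (hid ⟨b, right_mem_lineS v a b⟩).symm)
  exact hab (congrArg Subtype.val this)

lemma tpar_ne_zero {v : Fin n → Fin d → ℂ} (hinj : Function.Injective v) {a b : Fin n}
    (h3 : 3 ≤ (lineS v a b).ncard) (hab : a ≠ b) : tpar v a b ≠ 0 := by
  intro h
  have := tpar_spec v a b
  rw [h, zero_smul, add_zero] at this
  exact thirdPt_ne_left h3 hab (hinj this)

lemma tpar_ne_one {v : Fin n → Fin d → ℂ} (hinj : Function.Injective v) {a b : Fin n}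
    (h3 : 3 ≤ (lineS v a b).ncard) (hab : a ≠ b) : tpar v a b ≠ 1 := by
  intro h
  have hs := tpar_spec v a b
  rw [h, one_smul] at hs
  have : v (thirdPt v a b) = v b := by rw [hs]; abel
  exact thirdPt_ne_right h3 hab (hinj this)

/-- The row vector attached to the pair `(a, b)`. -/
noncomputable def rowVec (v : Fin n → Fin d → ℂ) (a b : Fin n) : Fin n → ℂ := fun p =>
  (if p = a then 1 - tpar v a b else 0) + (if p = b then tpar v a b else 0) +
    (if p = thirdPt v a b then -1 else 0)

lemma rowVec_apply_left {v : Fin n → Fin d → ℂ}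
    {a b : Fin n} (h3 : 3 ≤ (lineS v a b).ncard) (hab : a ≠ b) :
    rowVec v a b a = 1 - tpar v a b := by
  have hca := thirdPt_ne_left h3 hab
  simp [rowVec, hab, Ne.symm hca]

lemma rowVec_apply_right {v : Fin n → Fin d → ℂ}
    {a b : Fin n} (h3 : 3 ≤ (lineS v a b).ncard) (hab : a ≠ b) :
    rowVec v a b b = tpar v a b := by
  have hcb := thirdPt_ne_right h3 hab
  simp [rowVec, Ne.symm hab, Ne.symm hcb]

lemma rowVec_apply_third {v : Fin n → Fin d → ℂ}
    {a b : Fin n} (h3 : 3 ≤ (lineS v a b).ncard) (hab : a ≠ b) :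
    rowVec v a b (thirdPt v a b) = -1 := by
  have hca := thirdPt_ne_left h3 hab
  have hcb := thirdPt_ne_right h3 hab
  simp [rowVec, hca, hcb]

lemma rowVec_apply_other {v : Fin n → Fin d → ℂ} {a b p : Fin n}
    (h1 : p ≠ a) (h2 : p ≠ b) (h3 : p ≠ thirdPt v a b) :
    rowVec v a b p = 0 := by
  simp [rowVec, h1, h2, h3]

lemma rowVec_ne_zero_iff {v : Fin n → Fin d → ℂ} (hinj : Function.Injective v)
    {a b : Fin n} (h3 : 3 ≤ (lineS v a b).ncard) (hab : a ≠ b) (p : Fin n) :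
    rowVec v a b p ≠ 0 ↔ p = a ∨ p = b ∨ p = thirdPt v a b := by
  constructor
  · intro hne
    by_contra hcon
    push_neg at hcon
    exact hne (rowVec_apply_other hcon.1 hcon.2.1 hcon.2.2)
  · rintro (h | h | h) <;> rw [h]
    · rw [rowVec_apply_left h3 hab]
      exact sub_ne_zero.2 (Ne.symm (tpar_ne_one hinj h3 hab))
    · rw [rowVec_apply_right h3 hab]
      exact tpar_ne_zero hinj h3 hab
    · rw [rowVec_apply_third h3 hab]
      exact neg_ne_zero.2 one_ne_zero

lemma support_rowVec {v : Fin n → Fin d → ℂ} (hinj : Function.Injective v)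
    {a b : Fin n} (h3 : 3 ≤ (lineS v a b).ncard) (hab : a ≠ b) :
    {p : Fin n | rowVec v a b p ≠ 0} = {a, b, thirdPt v a b} := by
  ext p
  rw [Set.mem_setOf_eq, rowVec_ne_zero_iff hinj h3 hab]
  simp

lemma ncard_support_rowVec {v : Fin n → Fin d → ℂ} (hinj : Function.Injective v)
    {a b : Fin n} (h3 : 3 ≤ (lineS v a b).ncard) (hab : a ≠ b) :
    {p : Fin n | rowVec v a b p ≠ 0}.ncard = 3 := by
  rw [support_rowVec hinj h3 hab]
  exact Set.ncard_eq_three.2 ⟨a, b, thirdPt v a b, hab,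
    Ne.symm (thirdPt_ne_left h3 hab), Ne.symm (thirdPt_ne_right h3 hab), rfl⟩

lemma row_sum {v : Fin n → Fin d → ℂ} (a b : Fin n) (jj : Fin d) :
    ∑ p, rowVec v a b p * v p jj = 0 := by
  have hsplit : ∀ p : Fin n, rowVec v a b p * v p jj =
      (if p = a then (1 - tpar v a b) * v p jj else 0) +
      ((if p = b then tpar v a b * v p jj else 0) +
       (if p = thirdPt v a b then -1 * v p jj else 0)) := by
    intro p
    simp only [rowVec]
    split_ifs <;> ring
  rw [Finset.sum_congr rfl (fun p _ => hsplit p), Finset.sum_add_distrib,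
    Finset.sum_add_distrib, Finset.sum_ite_eq' Finset.univ a,
    Finset.sum_ite_eq' Finset.univ b, Finset.sum_ite_eq' Finset.univ (thirdPt v a b)]
  simp only [Finset.mem_univ, if_true]
  have hc := congrFun (tpar_spec v a b) jj
  simp only [Pi.add_apply, Pi.smul_apply, Pi.sub_apply, smul_eq_mul] at hc
  linear_combination -hc


lemma thirdPt_via {v : Fin n → Fin d → ℂ} {a b : Fin n} {S : Set (Fin n)}
    (hS : lineS v a b = S) (ha : a ∈ S) (hb : b ∈ S) :
    thirdPt v a b = ↑(QG S ⟨a, ha⟩ ⟨b, hb⟩) :=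
  QG_congr hS _ _ _ _

end QGdef

section Counting

def posIn {N : ℕ} (x : Fin N) (ab : Fin N × Fin N) : Fin 3 :=
  if x = ab.1 then 0 else if x = ab.2 then 1 else 2

lemma posIn_cases {N : ℕ} (x : Fin N) (ab : Fin N × Fin N) :
    (posIn x ab = 0 ∧ x = ab.1) ∨ (posIn x ab = 1 ∧ x ≠ ab.1 ∧ x = ab.2) ∨
      (posIn x ab = 2 ∧ x ≠ ab.1 ∧ x ≠ ab.2) := by
  unfold posIn
  split_ifs with h1 h2 <;> simp_all

lemma posIn_eq_zero {N : ℕ} {x : Fin N} {ab : Fin N × Fin N} (h : posIn x ab = 0) :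
    x = ab.1 := by
  unfold posIn at h
  split_ifs at h with h1 h2
  · exact h1
  · exact absurd h (by decide)
  · exact absurd h (by decide)

lemma posIn_eq_one {N : ℕ} {x : Fin N} {ab : Fin N × Fin N} (h : posIn x ab = 1) :
    x ≠ ab.1 ∧ x = ab.2 := by
  unfold posIn at h
  split_ifs at h with h1 h2
  · exact absurd h (by decide)
  · exact ⟨h1, h2⟩
  · exact absurd h (by decide)

lemma posIn_eq_two {N : ℕ} {x : Fin N} {ab : Fin N × Fin N} (h : posIn x ab = 2) :
    x ≠ ab.1 ∧ x ≠ ab.2 := by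
  unfold posIn at h
  split_ifs at h with h1 h2
  · exact absurd h (by decide)
  · exact absurd h (by decide)
  · exact ⟨h1, h2⟩

lemma ncard_filter_rows {N : ℕ} (R : Finset (Fin N × Fin N)) (P : Fin N × Fin N → Prop) :
    {ρ : Fin R.card | P ↑(R.equivFin.symm ρ)}.ncard = (R.filter P).card := by
  rw [← Nat.card_coe_set_eq]
  have e1 : {ρ : Fin R.card // P ↑(R.equivFin.symm ρ)} ≃ {x : ↥R // P ↑x} :=
    Equiv.subtypeEquiv R.equivFin.symm (fun ρ => Iff.rfl)
  have e2 : {x : ↥R // P ↑x} ≃ ↥(R.filter P) :=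
    { toFun := fun x => ⟨↑x.1, Finset.mem_filter.2 ⟨x.1.2, x.2⟩⟩
      invFun := fun y => ⟨⟨↑y, (Finset.mem_filter.1 y.2).1⟩, (Finset.mem_filter.1 y.2).2⟩
      left_inv := fun x => rfl
      right_inv := fun y => rfl }
  have : Nat.card ↑{ρ : Fin R.card | P ↑(R.equivFin.symm ρ)} = Nat.card ↥(R.filter P) :=
    Nat.card_congr ((Equiv.setCongr rfl).trans (e1.trans e2))
  rw [this, Nat.card_eq_fintype_card, Fintype.card_coe]

end Counting


theorem SG_to_design_matrix {n d : ℕ} (v : Fin n → (Fin d → ℂ)) (δ : ℝ)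
    (hv : IsSGConfig v δ) :
    ∃ (m : ℕ) (A : Matrix (Fin m) (Fin n) ℂ),
      IsDesignMatrix A 3 (3 * ⌈δ * ((n : ℝ) - 1)⌉₊) 6 ∧
      (∀ i : Fin m, ({j : Fin n | A i j ≠ 0}).ncard = 3) ∧
      A * Matrix.of (fun (i : Fin n) (j : Fin d) => v i j) = 0 := by
  classical
  obtain ⟨hinj, hsg⟩ := hv
  set R : Finset (Fin n × Fin n) :=
    Finset.univ.filter (fun ab => ab.1 ≠ ab.2 ∧ 3 ≤ (lineS v ab.1 ab.2).ncard) with hRdef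
  have hmemR : ∀ ab ∈ R, ab.1 ≠ ab.2 ∧ 3 ≤ (lineS v ab.1 ab.2).ncard := by
    intro ab hab
    rw [hRdef, Finset.mem_filter] at hab
    exact hab.2
  have hprR : ∀ ρ : Fin R.card,
      (↑(R.equivFin.symm ρ) : Fin n × Fin n).1 ≠ (↑(R.equivFin.symm ρ) : Fin n × Fin n).2 ∧
        3 ≤ (lineS v (↑(R.equivFin.symm ρ) : Fin n × Fin n).1
            (↑(R.equivFin.symm ρ) : Fin n × Fin n).2).ncard :=
    fun ρ => hmemR _ (R.equivFin.symm ρ).2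
  refine ⟨R.card, Matrix.of (fun ρ p =>
    rowVec v (↑(R.equivFin.symm ρ) : Fin n × Fin n).1
      (↑(R.equivFin.symm ρ) : Fin n × Fin n).2 p), ⟨?_, ?_, ?_⟩, ?_, ?_⟩
  -- row supports ≤ 3
  · intro ρ
    have := ncard_support_rowVec hinj (hprR ρ).2 (hprR ρ).1
    simp only [Matrix.of_apply]
    rw [this]
  -- column supports ≥ 3k
  · intro p
    have hset1 : {ρ : Fin R.card | Matrix.of (fun ρ p =>
        rowVec v (↑(R.equivFin.symm ρ) : Fin n × Fin n).1
          (↑(R.equivFin.symm ρ) : Fin n × Fin n).2 p) ρ p ≠ 0} =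
        {ρ : Fin R.card | (fun ab : Fin n × Fin n =>
          p = ab.1 ∨ p = ab.2 ∨ p = thirdPt v ab.1 ab.2) ↑(R.equivFin.symm ρ)} := by
      ext ρ
      simp only [Matrix.of_apply, Set.mem_setOf_eq]
      exact rowVec_ne_zero_iff hinj (hprR ρ).2 (hprR ρ).1 p
    rw [hset1,
      ncard_filter_rows R (fun ab => p = ab.1 ∨ p = ab.2 ∨ p = thirdPt v ab.1 ab.2),
      Finset.filter_congr_decidable]
    -- the special neighbours of p
    set Sp : Finset (Fin n) := Finset.univ.filter (fun j => OnSpecialLine v p j) with hSpdef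
    have hSp : ∀ j ∈ Sp, OnSpecialLine v p j := by
      intro j hj
      rw [hSpdef, Finset.mem_filter] at hj
      exact hj.2
    have hkSp : ⌈δ * ((n : ℝ) - 1)⌉₊ ≤ Sp.card := by
      have hgoal := hsg p
      have hset : {j : Fin n | OnSpecialLine v p j}.ncard = Sp.card := by
        rw [← Set.ncard_coe_finset]
        congr 1
        ext j
        simp [hSpdef]
      rw [hset] at hgoal
      exact Nat.ceil_le.2 hgoal
    have hvpj : ∀ j ∈ Sp, v p ≠ v j := by
      intro j hj h
      exact (hSp j hj).1 (hinj h).symm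
    have h3line : ∀ j ∈ Sp, 3 ≤ (lineS v p j).ncard := by
      intro j hj
      obtain ⟨hjp, l, hlp, hlj, hcol⟩ := hSp j hj
      have hl : l ∈ lineS v p j := (collinear_iff_mem_lineS (hvpj j hj) l).1 hcol
      have hsub : ({p, j, l} : Set (Fin n)) ⊆ lineS v p j := by
        intro x hx
        rcases hx with h | h | h
        · rw [h]; exact left_mem_lineS v p j
        · rw [h]; exact right_mem_lineS v p j
        · rw [Set.mem_singleton_iff] at h; rw [h]; exact hl
      calc (3 : ℕ) = ({p, j, l} : Set (Fin n)).ncard :=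
            (Set.ncard_eq_three.2 ⟨p, j, l, Ne.symm hjp, Ne.symm hlp, Ne.symm hlj, rfl⟩).symm
        _ ≤ _ := Set.ncard_le_ncard hsub (Set.toFinite _)
    have hexist : ∀ j ∈ Sp, ∃ a : Fin n, ∃ ha : a ∈ lineS v p j,
        QG (lineS v p j) ⟨a, ha⟩ ⟨j, right_mem_lineS v p j⟩ = ⟨p, left_mem_lineS v p j⟩ := by
      intro j hj
      obtain ⟨a, ha⟩ := ((QG_spec (h3line j hj)).2.1
        ⟨j, right_mem_lineS v p j⟩).surjective ⟨p, left_mem_lineS v p j⟩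
      exact ⟨↑a, a.2, ha⟩
    choose g hg hgspec using hexist
    have hgj : ∀ j (hj : j ∈ Sp), g j hj ≠ j := by
      intro j hj he
      have h1 : (⟨g j hj, hg j hj⟩ : ↥(lineS v p j)) = ⟨j, right_mem_lineS v p j⟩ :=
        Subtype.ext he
      have h2 := hgspec j hj
      rw [h1, (QG_spec (h3line j hj)).2.2] at h2
      exact (hSp j hj).1 (congrArg Subtype.val h2)
    have hgp : ∀ j (hj : j ∈ Sp), g j hj ≠ p := by
      intro j hj he
      have h1 : (⟨g j hj, hg j hj⟩ : ↥(lineS v p j)) = ⟨p, left_mem_lineS v p j⟩ :=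
        Subtype.ext he
      have h2 := hgspec j hj
      rw [h1] at h2
      have h3 := ((QG_spec (h3line j hj)).1 ⟨p, left_mem_lineS v p j⟩).injective
        (h2.trans ((QG_spec (h3line j hj)).2.2 ⟨p, left_mem_lineS v p j⟩).symm)
      exact (hSp j hj).1 (congrArg Subtype.val h3)
    have hglineq : ∀ j (hj : j ∈ Sp), lineS v (g j hj) j = lineS v p j := by
      intro j hj
      exact lineS_eq (hg j hj) (right_mem_lineS v p j)
        (fun h => hgj j hj (hinj h))
    set C0 : Finset (Fin n × Fin n) := Sp.image (fun j => (p, j)) with hC0def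
    set C1 : Finset (Fin n × Fin n) := Sp.image (fun j => (j, p)) with hC1def
    set C2 : Finset (Fin n × Fin n) :=
      Sp.attach.image (fun j => (g j.1 j.2, j.1)) with hC2def
    set colP : Fin n × Fin n → Prop :=
      fun ab => p = ab.1 ∨ p = ab.2 ∨ p = thirdPt v ab.1 ab.2 with hcolPdef
    have hC0sub : C0 ⊆ R.filter colP := by
      intro x hx
      obtain ⟨j, hj, rfl⟩ := Finset.mem_image.1 hx
      refine Finset.mem_filter.2 ⟨Finset.mem_filter.2 ⟨Finset.mem_univ _, ?_, ?_⟩, ?_⟩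
      · exact Ne.symm (hSp j hj).1
      · exact h3line j hj
      · exact Or.inl rfl
    have hC1sub : C1 ⊆ R.filter colP := by
      intro x hx
      obtain ⟨j, hj, rfl⟩ := Finset.mem_image.1 hx
      have hl : lineS v j p = lineS v p j :=
        lineS_eq (right_mem_lineS v p j) (left_mem_lineS v p j)
          (Ne.symm (hvpj j hj))
      refine Finset.mem_filter.2 ⟨Finset.mem_filter.2 ⟨Finset.mem_univ _, ?_, ?_⟩, ?_⟩
      · exact (hSp j hj).1
      · rw [show lineS v (j, p).1 (j, p).2 = lineS v p j from hl]
        exact h3line j hj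
      · exact Or.inr (Or.inl rfl)
    have hC2sub : C2 ⊆ R.filter colP := by
      intro x hx
      obtain ⟨j, _, rfl⟩ := Finset.mem_image.1 hx
      refine Finset.mem_filter.2 ⟨Finset.mem_filter.2 ⟨Finset.mem_univ _, ?_, ?_⟩, ?_⟩
      · exact hgj j.1 j.2
      · rw [show lineS v (g j.1 j.2, j.1).1 (g j.1 j.2, j.1).2
            = lineS v p j.1 from hglineq j.1 j.2]
        exact h3line j.1 j.2
      · refine Or.inr (Or.inr ?_)
        rw [thirdPt_via (hglineq j.1 j.2) (hg j.1 j.2) (right_mem_lineS v p j.1),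
          hgspec j.1 j.2]
    have hC0card : C0.card = Sp.card :=
      Finset.card_image_of_injective _ (fun x y h => (Prod.ext_iff.1 h).2)
    have hC1card : C1.card = Sp.card :=
      Finset.card_image_of_injective _ (fun x y h => (Prod.ext_iff.1 h).1)
    have hC2card : C2.card = Sp.card := by
      rw [hC2def, Finset.card_image_of_injective _
        (fun x y h => Subtype.ext (Prod.ext_iff.1 h).2), Finset.card_attach]
    have hd01 : Disjoint C0 C1 := by
      rw [Finset.disjoint_left]
      intro x hx0 hx1
      obtain ⟨j, hj, rfl⟩ := Finset.mem_image.1 hx0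
      obtain ⟨j', hj', hx⟩ := Finset.mem_image.1 hx1
      have : j' = p := (Prod.ext_iff.1 hx).1
      exact (hSp j' hj').1 this
    have hd02 : Disjoint C0 C2 := by
      rw [Finset.disjoint_left]
      intro x hx0 hx2
      obtain ⟨j, hj, rfl⟩ := Finset.mem_image.1 hx0
      obtain ⟨j', _, hx⟩ := Finset.mem_image.1 hx2
      exact hgp j'.1 j'.2 (Prod.ext_iff.1 hx).1
    have hd12 : Disjoint C1 C2 := by
      rw [Finset.disjoint_left]
      intro x hx1 hx2
      obtain ⟨j, hj, rfl⟩ := Finset.mem_image.1 hx1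
      obtain ⟨j', hj', hx⟩ := Finset.mem_image.1 hx2
      have : j'.1 = p := (Prod.ext_iff.1 hx).2
      exact (hSp j'.1 j'.2).1 this
    have hunion : ((C0 ∪ C1) ∪ C2).card = 3 * Sp.card := by
      rw [Finset.card_union_of_disjoint (Finset.disjoint_union_left.2 ⟨hd02, hd12⟩),
        Finset.card_union_of_disjoint hd01, hC0card, hC1card, hC2card]
      ring
    have hle : 3 * ⌈δ * ((n : ℝ) - 1)⌉₊ ≤ ((C0 ∪ C1) ∪ C2).card := by
      rw [hunion]; omega
    exact le_trans hle (Finset.card_le_card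
      (Finset.union_subset (Finset.union_subset hC0sub hC1sub) hC2sub))
  -- intersections of column supports ≤ 6
  · intro p q hpq
    have hvpq : v p ≠ v q := fun h => hpq (hinj h)
    have hset2 : {ρ : Fin R.card | Matrix.of (fun ρ p =>
        rowVec v (↑(R.equivFin.symm ρ) : Fin n × Fin n).1
          (↑(R.equivFin.symm ρ) : Fin n × Fin n).2 p) ρ p ≠ 0} ∩
        {ρ : Fin R.card | Matrix.of (fun ρ p =>
        rowVec v (↑(R.equivFin.symm ρ) : Fin n × Fin n).1
          (↑(R.equivFin.symm ρ) : Fin n × Fin n).2 p) ρ q ≠ 0} =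
        {ρ : Fin R.card | (fun ab : Fin n × Fin n =>
          (p = ab.1 ∨ p = ab.2 ∨ p = thirdPt v ab.1 ab.2) ∧
          (q = ab.1 ∨ q = ab.2 ∨ q = thirdPt v ab.1 ab.2)) ↑(R.equivFin.symm ρ)} := by
      ext ρ
      simp only [Matrix.of_apply, Set.mem_inter_iff, Set.mem_setOf_eq]
      rw [rowVec_ne_zero_iff hinj (hprR ρ).2 (hprR ρ).1 p,
        rowVec_ne_zero_iff hinj (hprR ρ).2 (hprR ρ).1 q]
    rw [hset2, ncard_filter_rows R (fun ab =>
      (p = ab.1 ∨ p = ab.2 ∨ p = thirdPt v ab.1 ab.2) ∧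
      (q = ab.1 ∨ q = ab.2 ∨ q = thirdPt v ab.1 ab.2)),
      Finset.filter_congr_decidable]
    have hT : ((Finset.univ : Finset (Fin 3 × Fin 3)).filter
        (fun x => x.1 ≠ x.2)).card = 6 := by decide
    rw [← hT]
    apply Finset.card_le_card_of_injOn (fun ab => (posIn p ab, posIn q ab))
    · intro ab hab
      rw [Finset.mem_coe, Finset.mem_filter] at hab
      have hpm := hab.2.1
      have hqm := hab.2.2
      simp only [Finset.mem_coe, Finset.mem_filter, Finset.mem_univ, true_and]
      rcases posIn_cases p ab with ⟨e1, f1⟩ | ⟨e1, f1⟩ | ⟨e1, f1⟩ <;>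
        rcases posIn_cases q ab with ⟨e2, f2⟩ | ⟨e2, f2⟩ | ⟨e2, f2⟩ <;>
        rw [e1, e2]
      · exact (hpq (f1.trans f2.symm)).elim
      · decide
      · decide
      · decide
      · exact (hpq (f1.2.trans f2.2.symm)).elim
      · decide
      · decide
      · decide
      · have hp3 : p = thirdPt v ab.1 ab.2 := (hpm.resolve_left f1.1).resolve_left f1.2
        have hq3 : q = thirdPt v ab.1 ab.2 := (hqm.resolve_left f2.1).resolve_left f2.2
        exact (hpq (hp3.trans hq3.symm)).elim
    · intro ab habm ab' habm' heq
      have hab := Finset.mem_filter.1 (Finset.mem_coe.1 habm)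
      have hab' := Finset.mem_filter.1 (Finset.mem_coe.1 habm')
      have hinfo : ∀ cd : Fin n × Fin n, cd ∈ R →
          (p = cd.1 ∨ p = cd.2 ∨ p = thirdPt v cd.1 cd.2) →
          (q = cd.1 ∨ q = cd.2 ∨ q = thirdPt v cd.1 cd.2) →
          ∃ (h1 : cd.1 ∈ lineS v p q) (h2 : cd.2 ∈ lineS v p q),
            cd.1 ≠ cd.2 ∧ 3 ≤ (lineS v p q).ncard ∧
            thirdPt v cd.1 cd.2 = ↑(QG (lineS v p q) ⟨cd.1, h1⟩ ⟨cd.2, h2⟩) := by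
        intro cd hcd hpm hqm
        have hmemline : ∀ x : Fin n,
            (x = cd.1 ∨ x = cd.2 ∨ x = thirdPt v cd.1 cd.2) → x ∈ lineS v cd.1 cd.2 := by
          rintro x (h | h | h) <;> rw [h]
          · exact left_mem_lineS v cd.1 cd.2
          · exact right_mem_lineS v cd.1 cd.2
          · exact thirdPt_mem v cd.1 cd.2
        have hSeq : lineS v cd.1 cd.2 = lineS v p q :=
          (lineS_eq (hmemline p hpm) (hmemline q hqm) hvpq).symm
        have h1 : cd.1 ∈ lineS v p q := hSeq ▸ left_mem_lineS v cd.1 cd.2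
        have h2 : cd.2 ∈ lineS v p q := hSeq ▸ right_mem_lineS v cd.1 cd.2
        refine ⟨h1, h2, (hmemR cd hcd).1, ?_, thirdPt_via hSeq h1 h2⟩
        rw [← hSeq]
        exact (hmemR cd hcd).2
      obtain ⟨h1, h2, hne, h3S, hthird⟩ := hinfo ab hab.1 hab.2.1 hab.2.2
      obtain ⟨h1', h2', hne', -, hthird'⟩ := hinfo ab' hab'.1 hab'.2.1 hab'.2.2
      have hepp : posIn p ab' = posIn p ab := ((Prod.ext_iff.1 heq).1).symm
      have heqq : posIn q ab' = posIn q ab := ((Prod.ext_iff.1 heq).2).symm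
      have hpS : p ∈ lineS v p q := left_mem_lineS v p q
      have hqS : q ∈ lineS v p q := right_mem_lineS v p q
      have hfin3 : ∀ t : Fin 3, t = 0 ∨ t = 1 ∨ t = 2 := by decide
      rcases hfin3 (posIn p ab) with hx | hx | hx <;>
        rcases hfin3 (posIn q ab) with hy | hy | hy
      -- (0,0)
      · exact (hpq ((posIn_eq_zero hx).trans (posIn_eq_zero hy).symm)).elim
      -- (0,1)
      · have hp1 := posIn_eq_zero hx
        have hp1' := posIn_eq_zero (hepp.trans hx)
        have hq1 := (posIn_eq_one hy).2
        have hq1' := (posIn_eq_one (heqq.trans hy)).2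
        exact Prod.ext (hp1.symm.trans hp1') (hq1.symm.trans hq1')
      -- (0,2)
      · have hp1 := posIn_eq_zero hx
        have hp1' := posIn_eq_zero (hepp.trans hx)
        have hf := posIn_eq_two hy
        have hf' := posIn_eq_two (heqq.trans hy)
        have hq3 : q = thirdPt v ab.1 ab.2 :=
          (hab.2.2.resolve_left hf.1).resolve_left hf.2
        have hq3' : q = thirdPt v ab'.1 ab'.2 :=
          (hab'.2.2.resolve_left hf'.1).resolve_left hf'.2
        have ha1 : (⟨ab.1, h1⟩ : ↥(lineS v p q)) = ⟨p, hpS⟩ := Subtype.ext hp1.symm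
        have ha1' : (⟨ab'.1, h1'⟩ : ↥(lineS v p q)) = ⟨p, hpS⟩ := Subtype.ext hp1'.symm
        have hc : QG (lineS v p q) ⟨p, hpS⟩ ⟨ab.2, h2⟩ = ⟨q, hqS⟩ := by
          rw [← ha1]
          exact Subtype.ext (hthird ▸ hq3).symm
        have hc' : QG (lineS v p q) ⟨p, hpS⟩ ⟨ab'.2, h2'⟩ = ⟨q, hqS⟩ := by
          rw [← ha1']
          exact Subtype.ext (hthird' ▸ hq3').symm
        have hkey := ((QG_spec h3S).1 ⟨p, hpS⟩).injective (hc.trans hc'.symm)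
        exact Prod.ext (hp1.symm.trans hp1') (congrArg Subtype.val hkey)
      -- (1,0)
      · have hp1 := (posIn_eq_one hx).2
        have hp1' := (posIn_eq_one (hepp.trans hx)).2
        have hq1 := posIn_eq_zero hy
        have hq1' := posIn_eq_zero (heqq.trans hy)
        exact Prod.ext (hq1.symm.trans hq1') (hp1.symm.trans hp1')
      -- (1,1)
      · exact (hpq ((posIn_eq_one hx).2.trans (posIn_eq_one hy).2.symm)).elim
      -- (1,2)
      · have hp1 := (posIn_eq_one hx).2
        have hp1' := (posIn_eq_one (hepp.trans hx)).2
        have hf := posIn_eq_two hy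
        have hf' := posIn_eq_two (heqq.trans hy)
        have hq3 : q = thirdPt v ab.1 ab.2 :=
          (hab.2.2.resolve_left hf.1).resolve_left hf.2
        have hq3' : q = thirdPt v ab'.1 ab'.2 :=
          (hab'.2.2.resolve_left hf'.1).resolve_left hf'.2
        have ha2 : (⟨ab.2, h2⟩ : ↥(lineS v p q)) = ⟨p, hpS⟩ := Subtype.ext hp1.symm
        have ha2' : (⟨ab'.2, h2'⟩ : ↥(lineS v p q)) = ⟨p, hpS⟩ := Subtype.ext hp1'.symm
        have hc : QG (lineS v p q) ⟨ab.1, h1⟩ ⟨p, hpS⟩ = ⟨q, hqS⟩ := by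
          rw [← ha2]
          exact Subtype.ext (hthird ▸ hq3).symm
        have hc' : QG (lineS v p q) ⟨ab'.1, h1'⟩ ⟨p, hpS⟩ = ⟨q, hqS⟩ := by
          rw [← ha2']
          exact Subtype.ext (hthird' ▸ hq3').symm
        have hkey := ((QG_spec h3S).2.1 ⟨p, hpS⟩).injective
          (show (fun i => QG (lineS v p q) i ⟨p, hpS⟩) ⟨ab.1, h1⟩ =
            (fun i => QG (lineS v p q) i ⟨p, hpS⟩) ⟨ab'.1, h1'⟩ from hc.trans hc'.symm)
        exact Prod.ext (congrArg Subtype.val hkey) (hp1.symm.trans hp1')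
      -- (2,0)
      · have hq1 := posIn_eq_zero hy
        have hq1' := posIn_eq_zero (heqq.trans hy)
        have hf := posIn_eq_two hx
        have hf' := posIn_eq_two (hepp.trans hx)
        have hp3 : p = thirdPt v ab.1 ab.2 :=
          (hab.2.1.resolve_left hf.1).resolve_left hf.2
        have hp3' : p = thirdPt v ab'.1 ab'.2 :=
          (hab'.2.1.resolve_left hf'.1).resolve_left hf'.2
        have ha1 : (⟨ab.1, h1⟩ : ↥(lineS v p q)) = ⟨q, hqS⟩ := Subtype.ext hq1.symm
        have ha1' : (⟨ab'.1, h1'⟩ : ↥(lineS v p q)) = ⟨q, hqS⟩ := Subtype.ext hq1'.symm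
        have hc : QG (lineS v p q) ⟨q, hqS⟩ ⟨ab.2, h2⟩ = ⟨p, hpS⟩ := by
          rw [← ha1]
          exact Subtype.ext (hthird ▸ hp3).symm
        have hc' : QG (lineS v p q) ⟨q, hqS⟩ ⟨ab'.2, h2'⟩ = ⟨p, hpS⟩ := by
          rw [← ha1']
          exact Subtype.ext (hthird' ▸ hp3').symm
        have hkey := ((QG_spec h3S).1 ⟨q, hqS⟩).injective (hc.trans hc'.symm)
        exact Prod.ext (hq1.symm.trans hq1') (congrArg Subtype.val hkey)
      -- (2,1)
      · have hq1 := (posIn_eq_one hy).2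
        have hq1' := (posIn_eq_one (heqq.trans hy)).2
        have hf := posIn_eq_two hx
        have hf' := posIn_eq_two (hepp.trans hx)
        have hp3 : p = thirdPt v ab.1 ab.2 :=
          (hab.2.1.resolve_left hf.1).resolve_left hf.2
        have hp3' : p = thirdPt v ab'.1 ab'.2 :=
          (hab'.2.1.resolve_left hf'.1).resolve_left hf'.2
        have ha2 : (⟨ab.2, h2⟩ : ↥(lineS v p q)) = ⟨q, hqS⟩ := Subtype.ext hq1.symm
        have ha2' : (⟨ab'.2, h2'⟩ : ↥(lineS v p q)) = ⟨q, hqS⟩ := Subtype.ext hq1'.symm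
        have hc : QG (lineS v p q) ⟨ab.1, h1⟩ ⟨q, hqS⟩ = ⟨p, hpS⟩ := by
          rw [← ha2]
          exact Subtype.ext (hthird ▸ hp3).symm
        have hc' : QG (lineS v p q) ⟨ab'.1, h1'⟩ ⟨q, hqS⟩ = ⟨p, hpS⟩ := by
          rw [← ha2']
          exact Subtype.ext (hthird' ▸ hp3').symm
        have hkey := ((QG_spec h3S).2.1 ⟨q, hqS⟩).injective
          (show (fun i => QG (lineS v p q) i ⟨q, hqS⟩) ⟨ab.1, h1⟩ =
            (fun i => QG (lineS v p q) i ⟨q, hqS⟩) ⟨ab'.1, h1'⟩ from hc.trans hc'.symm)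
        exact Prod.ext (congrArg Subtype.val hkey) (hq1.symm.trans hq1')
      -- (2,2)
      · have hf := posIn_eq_two hx
        have hf2 := posIn_eq_two hy
        have hp3 : p = thirdPt v ab.1 ab.2 :=
          (hab.2.1.resolve_left hf.1).resolve_left hf.2
        have hq3 : q = thirdPt v ab.1 ab.2 :=
          (hab.2.2.resolve_left hf2.1).resolve_left hf2.2
        exact (hpq (hp3.trans hq3.symm)).elim
  -- row supports exactly 3
  · intro ρ
    have := ncard_support_rowVec hinj (hprR ρ).2 (hprR ρ).1
    simp only [Matrix.of_apply]
    rw [this]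
  -- A * V = 0
  · ext ρ jj
    rw [Matrix.mul_apply]
    simp only [Matrix.of_apply, Matrix.zero_apply]
    exact row_sum _ _ jj
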